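/- Let Γ = (V,E) be a finite connected graph, let G be a group acting on Γ by graph automorphisms whose action on V is transitive, let n ≥ 2, and let V = V_1 ⊔ ⋯ ⊔ V_n be a system of imprimitivity of size n for the action G ↷ V. Then for every i ∈ {1,…,n} there exists an injective map f : V_i → V ∖ V_i such that for every v ∈ V_i, the pair (v, f(v)) is an edge of Γ. -/

import Mathlib

open scoped Pointwise

namespace Multiway

variable {V : Type*}

/-- The edge boundary `∂A`: the set of edges with one endpoint in `A` and the other in `Vᶜ∖A`. -/
def edgeBdry (G : SimpleGraph V) (A : Set V) : Set (Sym2 V) :=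
  {e | e ∈ G.edgeSet ∧ ∃ u v, e = s(u, v) ∧ u ∈ A ∧ v ∉ A}

/-- The symmetric vertex boundary `δA`: vertices incident to an edge crossing `A`. -/
def vertBdry (G : SimpleGraph V) (A : Set V) : Set V :=
  {x | ∃ y, G.Adj x y ∧ ¬ (x ∈ A ↔ y ∈ A)}

/-- A partition of the vertex set into `n` non-empty pairwise disjoint sets. -/
def IsNPartition (n : ℕ) (A : Fin n → Set V) : Prop :=
  (∀ i, (A i).Nonempty) ∧ (∀ i j, i ≠ j → Disjoint (A i) (A j)) ∧ (⋃ i, A i) = Set.univ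

/-- `max_i |∂A_i| / |A_i|`. -/
noncomputable def edgeRatioMax (G : SimpleGraph V) {n : ℕ} (A : Fin n → Set V) : ℝ :=
  ⨆ i, ((edgeBdry G (A i)).ncard : ℝ) / ((A i).ncard : ℝ)

/-- `max_i |δA_i| / |A_i|`. -/
noncomputable def vertRatioMax (G : SimpleGraph V) {n : ℕ} (A : Fin n → Set V) : ℝ :=
  ⨆ i, ((vertBdry G (A i)).ncard : ℝ) / ((A i).ncard : ℝ)

/-- The `n`-way isoperimetric constant `h_n(Γ)`. -/
noncomputable def multiH (G : SimpleGraph V) (n : ℕ) : ℝ :=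
  sInf {r | ∃ A : Fin n → Set V, IsNPartition n A ∧ r = edgeRatioMax G A}

/-- The `n`-way symmetric vertex isoperimetric constant `ι_n(Γ)`. -/
noncomputable def multiIota (G : SimpleGraph V) (n : ℕ) : ℝ :=
  sInf {r | ∃ A : Fin n → Set V, IsNPartition n A ∧ r = vertRatioMax G A}

/-- A graph is vertex-transitive if its automorphism group acts transitively on vertices. -/
def VertexTransitive (G : SimpleGraph V) : Prop :=
  ∀ u v : V, ∃ φ : G ≃g G, φ u = v


theorem imprimitivity_block_matching {V : Type*} [Fintype V] (Γ : SimpleGraph V)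
    (hconn : Γ.Connected)
    (G : Type*) [Group G] [MulAction G V]
    (hact : ∀ (g : G) (u v : V), Γ.Adj (g • u) (g • v) ↔ Γ.Adj u v)
    (htrans : ∀ u v : V, ∃ g : G, g • u = v)
    (n : ℕ) (hn : 2 ≤ n) (B : Fin n → Set V) (hB : IsNPartition n B)
    (himp : ∀ g : G, ∃ σ : Equiv.Perm (Fin n), ∀ i, g • B i = B (σ i)) :
    ∀ i : Fin n, ∃ f : V → V, Set.InjOn f (B i) ∧
      ∀ v ∈ B i, f v ∉ B i ∧ Γ.Adj v (f v) := by
  classical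
  obtain ⟨hne, hdisj, huniv⟩ := hB
  intro i
  -- blocks map onto blocks
  have hmaps : ∀ (g : G) (j k : Fin n), (∃ x, x ∈ g • B j ∧ x ∈ B k) → g • B j = B k := by
    rintro g j k ⟨x, hx1, hx2⟩
    obtain ⟨σ, hσ⟩ := himp g
    rw [hσ] at hx1 ⊢
    rcases eq_or_ne (σ j) k with h | h
    · rw [h]
    · exact absurd rfl ((hdisj _ _ h).ne_of_mem hx1 hx2)
  set t : V → Finset V := fun v => Finset.univ.filter (fun y => Γ.Adj v y ∧ y ∉ B i) with ht
  have hmem : ∀ v y, y ∈ t v ↔ (Γ.Adj v y ∧ y ∉ B i) := by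
    intro v y; simp [ht]
  -- there is an edge crossing the block boundary
  have hcross : ∃ u, u ∈ B i ∧ ∃ w, Γ.Adj u w ∧ w ∉ B i := by
    by_contra hc
    push_neg at hc
    have hclosed : ∀ {a b : V}, Γ.Walk a b → a ∈ B i → b ∈ B i := by
      intro a b p
      induction p with
      | nil => exact id
      | cons h _ ih => exact fun ha => ih (hc _ ha _ h)
    obtain ⟨j, hj⟩ := Fintype.exists_ne_of_one_lt_card (by simpa using (by omega : 1 < n)) i
    obtain ⟨w, hw⟩ := hne j
    obtain ⟨u, hu⟩ := hne i
    obtain ⟨p⟩ := hconn.preconnected u w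
    exact absurd rfl ((hdisj j i hj).ne_of_mem hw (hclosed p hu))
  obtain ⟨u₀, hu₀, w₀, hw₀adj, hw₀⟩ := hcross
  set d := (t u₀).card with hd
  have hdpos : 0 < d := Finset.card_pos.mpr ⟨w₀, (hmem _ _).mpr ⟨hw₀adj, hw₀⟩⟩
  -- transporting boundary neighbourhoods by stabilizing elements
  have himage : ∀ (g : G), g • B i = B i → ∀ u : V,
      t (g • u) = Finset.image (fun x => g • x) (t u) := by
    intro g hg u
    ext y
    simp only [Finset.mem_image, hmem]
    constructor
    · rintro ⟨hadj, hy⟩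
      refine ⟨g⁻¹ • y, ⟨?_, ?_⟩, smul_inv_smul g y⟩
      · have := (hact g u (g⁻¹ • y)).mp (by simpa [smul_inv_smul] using hadj)
        exact this
      · intro hmem'
        have h2 : g • (g⁻¹ • y) ∈ g • B i := Set.smul_mem_smul_set hmem'
        rw [hg, smul_inv_smul] at h2
        exact hy h2
    · rintro ⟨x, ⟨hadj, hx⟩, rfl⟩
      refine ⟨(hact g u x).mpr hadj, ?_⟩
      intro h
      rw [← hg] at h
      exact hx (Set.smul_mem_smul_set_iff.mp h)
  have hdconst : ∀ v, v ∈ B i → (t v).card = d := by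
    intro v hv
    obtain ⟨g, hg⟩ := htrans u₀ v
    have hgB : g • B i = B i := hmaps g i i ⟨v, ⟨u₀, hu₀, hg⟩, hv⟩
    rw [← hg, himage g hgB, Finset.card_image_of_injective _ (MulAction.injective g)]
  -- the reverse degree bound
  have hright : ∀ y, y ∉ B i →
      (Finset.univ.filter (fun w => Γ.Adj y w ∧ w ∈ B i)).card ≤ d := by
    intro y hy
    obtain ⟨c, hc⟩ : ∃ c, y ∈ B c := by
      have : y ∈ ⋃ j, B j := huniv ▸ Set.mem_univ y
      simpa using this
    have hci : c ≠ i := fun h => hy (h ▸ hc)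
    obtain ⟨g, hg⟩ := htrans y u₀
    obtain ⟨σ, hσ⟩ := himp g
    have hσc : σ c = i := by
      by_contra h
      have h1 : u₀ ∈ B (σ c) := hσ c ▸ ⟨y, hc, hg⟩
      exact absurd rfl ((hdisj _ _ h).ne_of_mem h1 hu₀)
    have hσi : σ i ≠ i := fun h => hci (σ.injective (hσc.trans h.symm))
    have hsub : Finset.image (fun x => g • x)
        (Finset.univ.filter (fun w => Γ.Adj y w ∧ w ∈ B i)) ⊆ t u₀ := by
      intro z hz
      simp only [Finset.mem_image, Finset.mem_filter, Finset.mem_univ, true_and] at hz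
      obtain ⟨x, ⟨hadj, hx⟩, rfl⟩ := hz
      rw [hmem]
      refine ⟨hg ▸ (hact g y x).mpr hadj, ?_⟩
      intro hmemi
      have h2 : g • x ∈ B (σ i) := hσ i ▸ Set.smul_mem_smul_set hx
      exact absurd rfl ((hdisj _ _ hσi).ne_of_mem h2 hmemi)
    calc (Finset.univ.filter (fun w => Γ.Adj y w ∧ w ∈ B i)).card
        = (Finset.image (fun x => g • x)
            (Finset.univ.filter (fun w => Γ.Adj y w ∧ w ∈ B i))).card :=
          (Finset.card_image_of_injective _ (MulAction.injective g)).symm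
      _ ≤ d := Finset.card_le_card hsub
  -- Hall's condition
  set t' : ↥(B i) → Finset V := fun v => t v.val with ht'
  have hHall : ∀ s : Finset ↥(B i), s.card ≤ (s.biUnion t').card := by
    intro s
    set N := s.biUnion t' with hN
    have hsub : ∀ v ∈ s, t' v ⊆ N := fun v hv => Finset.subset_biUnion_of_mem t' hv
    have hsum1 : ∑ v ∈ s, (t' v).card = d * s.card := by
      rw [Finset.sum_congr rfl (fun v _ => hdconst v.val v.property)]
      simp [Nat.mul_comm]
    have hsum2 : ∑ v ∈ s, (t' v).card
        = ∑ y ∈ N, (s.filter (fun v => y ∈ t' v)).card := by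
      have h1 : ∀ v ∈ s, (t' v).card = ∑ y ∈ N, (if y ∈ t' v then 1 else 0) := by
        intro v hv
        rw [← Finset.card_filter]
        congr 1
        rw [Finset.filter_mem_eq_inter, Finset.inter_eq_right.mpr (hsub v hv)]
      rw [Finset.sum_congr rfl h1, Finset.sum_comm]
      exact Finset.sum_congr rfl (fun y _ => (Finset.card_filter _ _).symm)
    have hb : ∀ y ∈ N, (s.filter (fun v => y ∈ t' v)).card ≤ d := by
      intro y hyN
      obtain ⟨v0, hv0, hyt⟩ := Finset.mem_biUnion.mp hyN
      have hyB : y ∉ B i := ((hmem _ _).mp hyt).2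
      have hle : (s.filter (fun v => y ∈ t' v)).card
          ≤ (Finset.univ.filter (fun w => Γ.Adj y w ∧ w ∈ B i)).card := by
        apply Finset.card_le_card_of_injOn (fun v => v.1)
        · intro v hv
          simp only [Finset.mem_coe, Finset.mem_filter, Finset.mem_univ, true_and] at hv ⊢
          obtain ⟨-, hyt'⟩ := hv
          exact ⟨((hmem _ _).mp hyt').1.symm, v.2⟩
        · exact fun a _ b _ h => Subtype.ext h
      exact hle.trans (hright y hyB)
    have hmain : d * s.card ≤ d * N.card := by
      calc d * s.card = ∑ v ∈ s, (t' v).card := hsum1.symm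
        _ = ∑ y ∈ N, (s.filter (fun v => y ∈ t' v)).card := hsum2
        _ ≤ ∑ _y ∈ N, d := Finset.sum_le_sum hb
        _ = d * N.card := by simp [Nat.mul_comm]
    exact Nat.le_of_mul_le_mul_left hmain hdpos
  obtain ⟨f₀, hf₀inj, hf₀mem⟩ :=
    (Finset.all_card_le_biUnion_card_iff_exists_injective t').mp hHall
  refine ⟨fun v => if h : v ∈ B i then f₀ ⟨v, h⟩ else v, ?_, ?_⟩
  · intro a ha b hb hab
    simp only [dif_pos ha, dif_pos hb] at hab
    exact congrArg Subtype.val (hf₀inj hab)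
  · intro v hv
    have h := (hmem v (f₀ ⟨v, hv⟩)).mp (hf₀mem ⟨v, hv⟩)
    simp only [dif_pos hv]
    exact ⟨h.2, h.1⟩

end Multiway
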